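/- Let Φ(x) = x be the identity map on M₂(ℂ) and Ψ(x) = UxU* with U = diag(1,−1). Both are unital CP maps, but their geometric mean is zero: Φ # Ψ = 0. Hence the geometric mean of unital CP maps need not be unital. -/

import Mathlib

open Matrix
open scoped ComplexOrder

/-- A linear map between matrix algebras is completely positive if every amplification
`id_{M_k} ⊗ Φ` preserves positive semidefiniteness. -/
def IsCP {m n : Type*} [Fintype m] [Fintype n]
    (Φ : Matrix m m ℂ →ₗ[ℂ] Matrix n n ℂ) : Prop :=
  ∀ (k : ℕ) (M : Matrix (Fin k × m) (Fin k × m) ℂ), M.PosSemidef →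
    (Matrix.of fun p q : Fin k × n =>
      Φ (Matrix.of fun x y => M (p.1, x) (q.1, y)) p.2 q.2).PosSemidef

/-- The block map `x ↦ [[Φ(x), Θ(x)],[Θ(x), Ψ(x)]]`. -/
noncomputable def blockMap {m n : Type*} [Fintype m] [Fintype n]
    (Φ Θ Ψ : Matrix m m ℂ →ₗ[ℂ] Matrix n n ℂ) :
    Matrix m m ℂ →ₗ[ℂ] Matrix (n ⊕ n) (n ⊕ n) ℂ where
  toFun x := Matrix.fromBlocks (Φ x) (Θ x) (Θ x) (Ψ x)
  map_add' x y := by ext (i | i) (j | j) <;> simp [Matrix.fromBlocks]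
  map_smul' c x := by ext (i | i) (j | j) <;> simp [Matrix.fromBlocks]

/-- The adjoint (conjugation) map `Ψ_M(x) = M x M*`. -/
noncomputable def conjMap {n : Type*} [Fintype n] (M : Matrix n n ℂ) :
    Matrix n n ℂ →ₗ[ℂ] Matrix n n ℂ where
  toFun x := M * x * Mᴴ
  map_add' x y := by simp [Matrix.add_mul, Matrix.mul_add]
  map_smul' c x := by simp [Matrix.smul_mul, Matrix.mul_smul]

lemma block_kill_left {A B C : Matrix (Fin 2) (Fin 2) ℂ}
    (h : (fromBlocks A B B C).PosSemidef) (a : Fin 2 → ℂ)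
    (ha : star a ⬝ᵥ A *ᵥ a = 0) : B *ᵥ a = 0 := by
  set z : Fin 2 ⊕ Fin 2 → ℂ := Sum.elim a 0 with hz
  have hdot : star z ⬝ᵥ (fromBlocks A B B C) *ᵥ z = 0 := by
    rw [fromBlocks_mulVec, dotProduct_block]
    simp [hz]
    simpa [dotProduct, Fin.sum_univ_two, Function.comp_def, vecHead, vecTail, Pi.star_apply] using ha
  have hzero := (h.dotProduct_mulVec_zero_iff z).mp hdot
  rw [fromBlocks_mulVec] at hzero
  ext j
  have := congrFun hzero (Sum.inr j)
  simpa [hz] using this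

lemma block_kill_right {A B C : Matrix (Fin 2) (Fin 2) ℂ}
    (h : (fromBlocks A B B C).PosSemidef) (b : Fin 2 → ℂ)
    (hb : star b ⬝ᵥ C *ᵥ b = 0) : B *ᵥ b = 0 := by
  set z : Fin 2 ⊕ Fin 2 → ℂ := Sum.elim 0 b with hz
  have hdot : star z ⬝ᵥ (fromBlocks A B B C) *ᵥ z = 0 := by
    rw [fromBlocks_mulVec, dotProduct_block]
    simp [hz]
    simpa [dotProduct, Fin.sum_univ_two, Function.comp_def, vecHead, vecTail, Pi.star_apply] using hb
  have hzero := (h.dotProduct_mulVec_zero_iff z).mp hdot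
  rw [fromBlocks_mulVec] at hzero
  ext j
  have := congrFun hzero (Sum.inl j)
  simpa [hz] using this

lemma hblock_gen (U : Matrix (Fin 2) (Fin 2) ℂ)
    (G : Matrix (Fin 2) (Fin 2) ℂ →ₗ[ℂ] Matrix (Fin 2) (Fin 2) ℂ)
    (h : IsCP (blockMap LinearMap.id G (conjMap U)))
    (x : Matrix (Fin 2) (Fin 2) ℂ) (hx : x.PosSemidef) :
    (fromBlocks x (G x) (G x) (U * x * Uᴴ)).PosSemidef := by
  have hM : (Matrix.of fun p q : Fin 1 × Fin 2 => x p.2 q.2).PosSemidef := by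
    have := hx.submatrix (Prod.snd : Fin 1 × Fin 2 → Fin 2)
    convert this using 2
    rfl
  have hN := h 1 _ hM
  have hsub := hN.submatrix (fun i : Fin 2 ⊕ Fin 2 => ((0 : Fin 1), i))
  convert hsub using 1
  ext (i | i) (j | j) <;> rfl

lemma rank_one_psd (v : Fin 2 → ℂ) :
    (Matrix.of fun i j => star (v i) * v j : Matrix (Fin 2) (Fin 2) ℂ).PosSemidef := by
  have h := posSemidef_conjTranspose_mul_self (Matrix.of (fun _ i => v i) : Matrix (Fin 1) (Fin 2) ℂ)
  convert h using 1
  ext i j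
  simp [mul_apply]

lemma eq_zero_of_mulVec_pm (B : Matrix (Fin 2) (Fin 2) ℂ)
    (h1 : B *ᵥ ![1, 1] = 0) (h2 : B *ᵥ ![1, -1] = 0) : B = 0 := by
  ext i j
  have e1 := congrFun h1 i
  have e2 := congrFun h2 i
  simp [mulVec, dotProduct, Fin.sum_univ_two] at e1 e2
  fin_cases j
  · show B i 0 = 0; linear_combination (e1 + e2) / 2
  · show B i 1 = 0; linear_combination (e1 - e2) / 2

lemma eq_zero_of_mulVec_I (B : Matrix (Fin 2) (Fin 2) ℂ)
    (h1 : B *ᵥ ![Complex.I, 1] = 0) (h2 : B *ᵥ ![Complex.I, -1] = 0) : B = 0 := by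
  ext i j
  have e1 := congrFun h1 i
  have e2 := congrFun h2 i
  simp [mulVec, dotProduct, Fin.sum_univ_two] at e1 e2
  fin_cases j
  · show B i 0 = 0
    linear_combination (-Complex.I / 2) * (e1 + e2) + B i 0 * Complex.I_sq
  · show B i 1 = 0; linear_combination (e1 - e2) / 2

/-- with `Φ = id` on `M₂(ℂ)` and `Ψ(x) = UxU*` for `U = diag(1,−1)`, both
maps are unital CP maps, but their geometric mean is the zero map; in particular the
geometric mean of unital CP maps need not be unital. -/
theorem geom_mean_of_unital_cp_maps_not_unital
    (U : Matrix (Fin 2) (Fin 2) ℂ) (hU : U = !![1, 0; 0, -1])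
    (Gmap : Matrix (Fin 2) (Fin 2) ℂ →ₗ[ℂ] Matrix (Fin 2) (Fin 2) ℂ)
    (hGmem : IsCP (blockMap LinearMap.id Gmap (conjMap U)))
    (hGmax : ∀ Θ : Matrix (Fin 2) (Fin 2) ℂ →ₗ[ℂ] Matrix (Fin 2) (Fin 2) ℂ,
      IsCP (blockMap LinearMap.id Θ (conjMap U)) → IsCP (Gmap - Θ)) :
    (LinearMap.id : Matrix (Fin 2) (Fin 2) ℂ →ₗ[ℂ] Matrix (Fin 2) (Fin 2) ℂ) 1 = 1 ∧
      conjMap U 1 = 1 ∧ Gmap = 0 ∧ Gmap 1 ≠ 1 := by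
  subst hU
  set U : Matrix (Fin 2) (Fin 2) ℂ := !![1, 0; 0, -1] with hU
  -- the five rank-one positive matrices we use
  have psd1 : (!![1, 1; 1, 1] : Matrix (Fin 2) (Fin 2) ℂ).PosSemidef := by
    have := rank_one_psd ![1, 1]
    convert this using 1; ext i j; fin_cases i <;> fin_cases j <;> simp
  have psd2 : (!![1, -1; -1, 1] : Matrix (Fin 2) (Fin 2) ℂ).PosSemidef := by
    have := rank_one_psd ![1, -1]
    convert this using 1; ext i j; fin_cases i <;> fin_cases j <;> simp
  have psd3 : (!![1, -Complex.I; Complex.I, 1] : Matrix (Fin 2) (Fin 2) ℂ).PosSemidef := by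
    have := rank_one_psd ![1, -Complex.I]
    convert this using 1
    ext i j; fin_cases i <;> fin_cases j <;>
      simp [Complex.ext_iff]
  have psd4 : (!![1, Complex.I; -Complex.I, 1] : Matrix (Fin 2) (Fin 2) ℂ).PosSemidef := by
    have := rank_one_psd ![1, Complex.I]
    convert this using 1
    ext i j; fin_cases i <;> fin_cases j <;>
      simp [Complex.ext_iff]
  have psd5 : (!![1, 0; 0, 0] : Matrix (Fin 2) (Fin 2) ℂ).PosSemidef := by
    have := rank_one_psd ![1, 0]
    convert this using 1; ext i j; fin_cases i <;> fin_cases j <;> simp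
  have psd6 : (!![0, 0; 0, 1] : Matrix (Fin 2) (Fin 2) ℂ).PosSemidef := by
    have := rank_one_psd ![0, 1]
    convert this using 1; ext i j; fin_cases i <;> fin_cases j <;> simp
  -- conjugation by U
  have hconj : ∀ a b c d : ℂ, U * !![a, b; c, d] * Uᴴ = !![a, -b; -c, d] := by
    intro a b c d
    ext i j
    fin_cases i <;> fin_cases j <;>
      simp [hU, mul_apply, Fin.sum_univ_two]
  -- block positivity for each test matrix
  have hb1 := hblock_gen U Gmap hGmem _ psd1
  have hb2 := hblock_gen U Gmap hGmem _ psd2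
  have hb3 := hblock_gen U Gmap hGmem _ psd3
  have hb4 := hblock_gen U Gmap hGmem _ psd4
  have hb5 := hblock_gen U Gmap hGmem _ psd5
  have hb6 := hblock_gen U Gmap hGmem _ psd6
  rw [hconj] at hb1 hb2 hb3 hb4 hb5 hb6
  have hG1 : Gmap !![1, 1; 1, 1] = 0 := by
    refine eq_zero_of_mulVec_pm _ ?_ ?_
    · exact block_kill_right hb1 ![1, 1]
        (by norm_num [dotProduct, mulVec, Fin.sum_univ_two])
    · exact block_kill_left hb1 ![1, -1]
        (by norm_num [dotProduct, mulVec, Fin.sum_univ_two])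
  have hG2 : Gmap !![1, -1; -1, 1] = 0 := by
    refine eq_zero_of_mulVec_pm _ ?_ ?_
    · exact block_kill_left hb2 ![1, 1]
        (by norm_num [dotProduct, mulVec, Fin.sum_univ_two])
    · exact block_kill_right hb2 ![1, -1]
        (by norm_num [dotProduct, mulVec, Fin.sum_univ_two])
  have hG3 : Gmap !![1, -Complex.I; Complex.I, 1] = 0 := by
    refine eq_zero_of_mulVec_I _ ?_ ?_
    · exact block_kill_left hb3 ![Complex.I, 1]
        (by norm_num [dotProduct, mulVec, Fin.sum_univ_two])
    · exact block_kill_right hb3 ![Complex.I, -1]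
        (by norm_num [dotProduct, mulVec, Fin.sum_univ_two])
  -- partial information about Gmap on the diagonal units
  have k5 : Gmap !![1, 0; 0, 0] *ᵥ ![0, 1] = 0 :=
    block_kill_left hb5 ![0, 1] (by norm_num [dotProduct, mulVec, Fin.sum_univ_two])
  have k6 : Gmap !![0, 0; 0, 1] *ᵥ ![1, 0] = 0 :=
    block_kill_left hb6 ![1, 0] (by norm_num [dotProduct, mulVec, Fin.sum_univ_two])
  have k5a : (Gmap !![1, 0; 0, 0]) 0 1 = 0 := by
    have := congrFun k5 0
    simpa [mulVec, dotProduct, Fin.sum_univ_two] using this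
  have k5b : (Gmap !![1, 0; 0, 0]) 1 1 = 0 := by
    have := congrFun k5 1
    simpa [mulVec, dotProduct, Fin.sum_univ_two] using this
  have k5c : (Gmap !![1, 0; 0, 0]) 1 0 = 0 := by
    have hH := hb5.1
    have h2 := congrFun (congrFun hH (Sum.inl 0)) (Sum.inr 1)
    simp [conjTranspose_apply, fromBlocks] at h2
    rw [← h2] at k5a
    simpa using congrArg (starRingEnd ℂ) k5a
  have k6a : (Gmap !![0, 0; 0, 1]) 0 0 = 0 := by
    have := congrFun k6 0
    simpa [mulVec, dotProduct, Fin.sum_univ_two] using this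
  have k6b : (Gmap !![0, 0; 0, 1]) 1 0 = 0 := by
    have := congrFun k6 1
    simpa [mulVec, dotProduct, Fin.sum_univ_two] using this
  have k6c : (Gmap !![0, 0; 0, 1]) 0 1 = 0 := by
    have hH := hb6.1
    have h2 := congrFun (congrFun hH (Sum.inl 1)) (Sum.inr 0)
    simp [conjTranspose_apply, fromBlocks] at h2
    rw [← h2] at k6b
    simpa using congrArg (starRingEnd ℂ) k6b
  -- combine
  have hsum : Gmap !![1, 0; 0, 0] + Gmap !![0, 0; 0, 1] = 0 := by
    have h : (!![1, 0; 0, 0] + !![0, 0; 0, 1] : Matrix (Fin 2) (Fin 2) ℂ) =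
        (2 : ℂ)⁻¹ • (!![1, 1; 1, 1] + !![1, -1; -1, 1]) := by
      ext i j; fin_cases i <;> fin_cases j <;> norm_num
    rw [← map_add, h, LinearMap.map_smul, map_add, hG1, hG2]
    simp
  have hG5 : Gmap !![1, 0; 0, 0] = 0 := by
    ext i j
    fin_cases i <;> fin_cases j
    · have h00 := congrFun (congrFun hsum 0) 0
      simp only [Matrix.add_apply, Matrix.zero_apply] at h00 ⊢
      rw [k6a, add_zero] at h00
      exact h00
    · exact k5a
    · exact k5c
    · exact k5b
  have hG6 : Gmap !![0, 0; 0, 1] = 0 := by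
    have : Gmap !![0, 0; 0, 1] = -(Gmap !![1, 0; 0, 0]) + (Gmap !![1, 0; 0, 0] + Gmap !![0, 0; 0, 1]) := by abel
    rw [this, hsum, hG5]; simp
  have hGoff : Gmap !![0, 1; 1, 0] = 0 := by
    have h : (!![0, 1; 1, 0] : Matrix (Fin 2) (Fin 2) ℂ) =
        (2 : ℂ)⁻¹ • (!![1, 1; 1, 1] - !![1, -1; -1, 1]) := by
      ext i j; fin_cases i <;> fin_cases j <;> norm_num
    rw [h, LinearMap.map_smul, map_sub, hG1, hG2]; simp
  have hGoffI : Gmap !![0, -Complex.I; Complex.I, 0] = 0 := by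
    have h : (!![0, -Complex.I; Complex.I, 0] : Matrix (Fin 2) (Fin 2) ℂ) =
        !![1, -Complex.I; Complex.I, 1] - (!![1, 0; 0, 0] + !![0, 0; 0, 1]) := by
      ext i j; fin_cases i <;> fin_cases j <;> norm_num
    rw [h, map_sub, map_add, hG3, hG5, hG6]; simp
  have hG12 : Gmap !![0, 1; 0, 0] = 0 := by
    have h : (!![0, 1; 0, 0] : Matrix (Fin 2) (Fin 2) ℂ) =
        (2 : ℂ)⁻¹ • !![0, 1; 1, 0] + (Complex.I / 2) • !![0, -Complex.I; Complex.I, 0] := by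
      ext i j; fin_cases i <;> fin_cases j <;>
        simp [Complex.ext_iff] <;> norm_num
    rw [h, map_add, LinearMap.map_smul, LinearMap.map_smul, hGoff, hGoffI]; simp
  have hG21 : Gmap !![0, 0; 1, 0] = 0 := by
    have h : (!![0, 0; 1, 0] : Matrix (Fin 2) (Fin 2) ℂ) =
        (2 : ℂ)⁻¹ • !![0, 1; 1, 0] - (Complex.I / 2) • !![0, -Complex.I; Complex.I, 0] := by
      ext i j; fin_cases i <;> fin_cases j <;>
        simp [Complex.ext_iff] <;> norm_num
    rw [h, map_sub, LinearMap.map_smul, LinearMap.map_smul, hGoff, hGoffI]; simp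
  have hGzero : Gmap = 0 := by
    apply LinearMap.ext
    intro x
    have hx : x = x 0 0 • !![1, 0; 0, 0] + x 0 1 • !![0, 1; 0, 0] +
        x 1 0 • !![0, 0; 1, 0] + x 1 1 • !![0, 0; 0, 1] := by
      ext i j; fin_cases i <;> fin_cases j <;> simp
    rw [LinearMap.zero_apply]
    conv_lhs => rw [hx]
    rw [map_add, map_add, map_add, LinearMap.map_smul, LinearMap.map_smul,
      LinearMap.map_smul, LinearMap.map_smul, hG5, hG6, hG12, hG21]
    simp
  refine ⟨rfl, ?_, hGzero, ?_⟩
  · show U * 1 * Uᴴ = 1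
    have h1 : (1 : Matrix (Fin 2) (Fin 2) ℂ) = !![1, 0; 0, 1] := by
      ext i j; fin_cases i <;> fin_cases j <;> simp [Matrix.one_apply]
    rw [h1, hconj]
    norm_num
  · rw [hGzero]
    simp only [LinearMap.zero_apply]
    exact zero_ne_one
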